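/- There exists a function i : ℕ × ℕ × ℕ → ℕ satisfying the polarized partition property above and additionally satisfying, for all n, all 0 < l, and all k < l, the growth estimate i(n+1,l,k) ≥ 2^{x(n,l)} + i(n,l,k), where x(n,l) = ∏_{k<l} i(n,l,k). -/

import Mathlib

attribute [local instance] Classical.propDecidable

def prodSet (F : ℕ → Finset ℕ) (m : ℕ) : Set (ℕ → ℕ) :=
  {s | (∀ k, k < m → s k ∈ F k) ∧ ∀ k, m ≤ k → s k = 0}

noncomputable def tupleSet (F : ℕ → Finset ℕ) : ℕ → Finset (ℕ → ℕ)
  | 0 => {fun _ => 0}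
  | m + 1 => (F m).biUnion fun a => (tupleSet F m).image fun s => Function.update s m a

lemma mem_tupleSet (F : ℕ → Finset ℕ) : ∀ m s, s ∈ tupleSet F m ↔ s ∈ prodSet F m := by
  intro m
  induction m with
  | zero =>
    intro s
    simp only [tupleSet, Finset.mem_singleton, prodSet, Set.mem_setOf_eq]
    constructor
    · rintro rfl; exact ⟨fun k hk => absurd hk (Nat.not_lt_zero k), fun k _ => rfl⟩
    · rintro ⟨-, h⟩; funext k; exact h k (Nat.zero_le k)
  | succ m ih =>
    intro s
    simp only [tupleSet, Finset.mem_biUnion, Finset.mem_image]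
    constructor
    · rintro ⟨a, ha, t, ht, rfl⟩
      rw [ih] at ht
      refine ⟨fun k hk => ?_, fun k hk => ?_⟩
      · rcases eq_or_ne k m with rfl | hne
        · simpa using ha
        · rw [Function.update_of_ne hne]
          exact ht.1 k (lt_of_le_of_ne (Nat.lt_succ_iff.mp hk) hne)
      · have : m < k := by omega
        rw [Function.update_of_ne (by omega)]
        exact ht.2 k (by omega)
    · rintro ⟨h1, h2⟩
      refine ⟨s m, h1 m (Nat.lt_succ_self m), Function.update s m 0, ?_, ?_⟩
      · rw [ih]
        refine ⟨fun k hk => ?_, fun k hk => ?_⟩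
        · rw [Function.update_of_ne (by omega)]; exact h1 k (by omega)
        · rcases eq_or_ne k m with rfl | hne
          · simp
          · rw [Function.update_of_ne hne]; exact h2 k (by omega)
      · rw [Function.update_idem, Function.update_eq_self]

lemma card_tupleSet (F : ℕ → Finset ℕ) :
    ∀ m, (tupleSet F m).card ≤ ∏ j ∈ Finset.range m, (F j).card := by
  intro m
  induction m with
  | zero => simp [tupleSet]
  | succ m ih =>
    calc (tupleSet F (m+1)).card
        ≤ ∑ a ∈ F m, ((tupleSet F m).image fun s => Function.update s m a).card :=
          Finset.card_biUnion_le
      _ ≤ ∑ _a ∈ F m, (tupleSet F m).card :=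
          Finset.sum_le_sum fun a _ => Finset.card_image_le
      _ = (F m).card * (tupleSet F m).card := by rw [Finset.sum_const, smul_eq_mul]
      _ ≤ (F m).card * ∏ j ∈ Finset.range m, (F j).card := Nat.mul_le_mul_left _ ih
      _ = ∏ j ∈ Finset.range (m+1), (F j).card := by rw [Finset.prod_range_succ, mul_comm]

lemma key (a b : ℕ → ℕ) :
    ∀ m, (∀ k, k < m → 0 < b k ∧ 2 ^ (∏ j ∈ Finset.range k, a j) * b k ≤ a k) →
    ∀ F : ℕ → Finset ℕ, (∀ k, k < m → (F k).card = a k) →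
    ∀ X₀ X₁ : Set (ℕ → ℕ), prodSet F m ⊆ X₀ ∪ X₁ →
    ∃ E : ℕ → Finset ℕ, (∀ k, k < m → E k ⊆ F k ∧ (E k).card = b k) ∧
      (prodSet E m ⊆ X₀ ∨ prodSet E m ⊆ X₁) := by
  intro m
  induction m with
  | zero =>
    intro _ F _ X₀ X₁ hcov
    have hz : (fun _ => 0 : ℕ → ℕ) ∈ prodSet F 0 :=
      ⟨fun k hk => absurd hk (Nat.not_lt_zero k), fun _ _ => rfl⟩
    have hsub : ∀ s, s ∈ prodSet (fun _ => (∅ : Finset ℕ)) 0 → s = fun _ => 0 := by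
      rintro s ⟨-, h⟩; funext k; exact h k (Nat.zero_le k)
    refine ⟨fun _ => ∅, fun k hk => absurd hk (Nat.not_lt_zero k), ?_⟩
    rcases hcov hz with h | h
    · exact Or.inl fun s hs => (hsub s hs) ▸ h
    · exact Or.inr fun s hs => (hsub s hs) ▸ h
  | succ m ih =>
    intro hab F hF X₀ X₁ hcov
    classical
    set T := tupleSet F m with hT
    -- pigeonhole on F m
    set f : ℕ → Finset (ℕ → ℕ) := fun x => T.filter (fun s => Function.update s m x ∈ X₀) with hf
    have hmaps : ∀ x ∈ F m, f x ∈ T.powerset := fun x _ =>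
      Finset.mem_powerset.mpr (Finset.filter_subset _ _)
    have hbm : 0 < b m ∧ 2 ^ (∏ j ∈ Finset.range m, a j) * b m ≤ a m :=
      hab m (Nat.lt_succ_self m)
    have hcard : T.powerset.card * b m ≤ (F m).card := by
      rw [Finset.card_powerset, hF m (Nat.lt_succ_self m)]
      calc 2 ^ T.card * b m ≤ 2 ^ (∏ j ∈ Finset.range m, a j) * b m := by
            apply Nat.mul_le_mul_right
            apply Nat.pow_le_pow_right (by norm_num)
            calc T.card ≤ ∏ j ∈ Finset.range m, (F j).card := card_tupleSet F m
              _ = ∏ j ∈ Finset.range m, a j :=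
                Finset.prod_congr rfl fun j hj => hF j (by
                  have := Finset.mem_range.mp hj; omega)
        _ ≤ a m := hbm.2
    obtain ⟨y, -, hy⟩ := Finset.exists_le_card_fiber_of_mul_le_card_of_maps_to hmaps
      ⟨∅, Finset.empty_mem_powerset T⟩ hcard
    obtain ⟨Em, hEmsub, hEmcard⟩ := Finset.exists_subset_card_eq hy
    have hEmF : Em ⊆ F m := hEmsub.trans (Finset.filter_subset _ _)
    obtain ⟨a₀, ha₀⟩ := Finset.card_pos.mp (hEmcard ▸ hbm.1)
    -- all elements of Em induce the same coloring
    have hsame : ∀ x ∈ Em, ∀ s ∈ prodSet F m,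
        (Function.update s m x ∈ X₀ ↔ Function.update s m a₀ ∈ X₀) := by
      intro x hx s hs
      have hsT : s ∈ T := (mem_tupleSet F m s).mpr hs
      have h1 : f x = y := (Finset.mem_filter.mp (hEmsub hx)).2
      have h2 : f a₀ = y := (Finset.mem_filter.mp (hEmsub ha₀)).2
      constructor
      · intro h
        have : s ∈ f x := Finset.mem_filter.mpr ⟨hsT, h⟩
        rw [h1, ← h2] at this
        exact (Finset.mem_filter.mp this).2
      · intro h
        have : s ∈ f a₀ := Finset.mem_filter.mpr ⟨hsT, h⟩
        rw [h2, ← h1] at this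
        exact (Finset.mem_filter.mp this).2
    -- apply IH to the induced coloring
    have hcov' : prodSet F m ⊆ {s | Function.update s m a₀ ∈ X₀} ∪
        {s | Function.update s m a₀ ∉ X₀} := fun s _ => Classical.em _
    obtain ⟨E', hE', hmono⟩ := ih (fun k hk => hab k (by omega)) F
      (fun k hk => hF k (by omega)) _ _ hcov'
    set E : ℕ → Finset ℕ := Function.update E' m Em with hE
    have hEk : ∀ k, k < m → E k = E' k := fun k hk =>
      Function.update_of_ne (by omega) _ _
    refine ⟨E, fun k hk => ?_, ?_⟩
    · rcases eq_or_ne k m with rfl | hne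
      · simp only [hE, Function.update_self]
        exact ⟨hEmF, hEmcard⟩
      · rw [hEk k (by omega)]
        exact hE' k (by omega)
    · -- transfer monochromaticity
      have main : ∀ s ∈ prodSet E (m+1),
          (s ∈ X₀ ↔ Function.update s m 0 ∈ {t | Function.update t m a₀ ∈ X₀}) ∧
          Function.update s m 0 ∈ prodSet E' m ∧ s ∈ prodSet F (m+1) := by
        intro s hs
        have hsm : s m ∈ Em := by
          have := hs.1 m (Nat.lt_succ_self m)
          simpa [hE] using this
        have hs' : Function.update s m 0 ∈ prodSet E' m := by
          refine ⟨fun k hk => ?_, fun k hk => ?_⟩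
          · rw [Function.update_of_ne (by omega)]
            rw [← hEk k hk]
            exact hs.1 k (by omega)
          · rcases eq_or_ne k m with rfl | hne
            · simp
            · rw [Function.update_of_ne hne]
              exact hs.2 k (by omega)
        have hsF : s ∈ prodSet F (m+1) := by
          refine ⟨fun k hk => ?_, hs.2⟩
          rcases eq_or_ne k m with rfl | hne
          · exact hEmF hsm
          · have hk' : k < m := by omega
            exact (hE' k hk').1 ((hEk k hk') ▸ hs.1 k hk)
        have hs'F : Function.update s m 0 ∈ prodSet F m := by
          refine ⟨fun k hk => ?_, fun k hk => ?_⟩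
          · rw [Function.update_of_ne (by omega)]
            exact hsF.1 k (by omega)
          · rcases eq_or_ne k m with rfl | hne
            · simp
            · rw [Function.update_of_ne hne]
              exact hsF.2 k (by omega)
        have heq : Function.update (Function.update s m 0) m (s m) = s := by
          rw [Function.update_idem, Function.update_eq_self]
        have := hsame (s m) hsm _ hs'F
        rw [heq] at this
        refine ⟨?_, hs', hsF⟩
        simp only [Set.mem_setOf_eq, Function.update_idem] at this ⊢
        exact this
      rcases hmono with h | h
      · left
        intro s hs
        obtain ⟨hiff, hs', _⟩ := main s hs
        exact hiff.mpr (h hs')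
      · right
        intro s hs
        obtain ⟨hiff, hs', hsF⟩ := main s hs
        have : s ∉ X₀ := fun hx => (h hs') (hiff.mp hx)
        rcases hcov hsF with h0 | h1
        · exact absurd h0 this
        · exact h1

-- size functions
def auxP (b : ℕ → ℕ) (X : ℕ) : ℕ → ℕ
  | 0 => 1
  | k + 1 => auxP b X k * (2 ^ (X + auxP b X k) + 2 * b k)

def nextFun (b : ℕ → ℕ) (X : ℕ) (k : ℕ) : ℕ := 2 ^ (X + auxP b X k) + 2 * b k

def iFun : ℕ → ℕ → ℕ → ℕ
  | 0, _, _ => 1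
  | n + 1, l, k => nextFun (iFun n l) (∏ j ∈ Finset.range l, iFun n l j) k

lemma auxP_eq (b : ℕ → ℕ) (X : ℕ) :
    ∀ k, auxP b X k = ∏ j ∈ Finset.range k, nextFun b X j := by
  intro k
  induction k with
  | zero => simp [auxP]
  | succ k ih => rw [Finset.prod_range_succ, ← ih]; rfl

lemma iFun_pos : ∀ n l k, 0 < iFun n l k := by
  intro n l k
  cases n with
  | zero => simp [iFun]
  | succ n => simp only [iFun, nextFun]; positivity

/-- Polarized Ramsey theorem for finite products of finite sets,
together with the growth estimate `i(n+1,l,k) ≥ 2^{x(n,l)} + i(n,l,k)`,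
where `x(n,l) = ∏_{k<l} i(n,l,k)`. -/
theorem polarized_partition_with_growth :
    ∃ i : ℕ → ℕ → ℕ → ℕ,
      (∀ n l k, 0 < l → k < l → 0 < i n l k) ∧
      (∀ n l m, 0 < l → 0 < m → m ≤ l →
        ∀ F : ℕ → Finset ℕ, (∀ k, k < m → (F k).card = i (n + 1) l k) →
          ∀ X₀ X₁ : Set (ℕ → ℕ), prodSet F m ⊆ X₀ ∪ X₁ →
            ∃ E : ℕ → Finset ℕ,
              (∀ k, k < m → E k ⊆ F k ∧ (E k).card = i n l k) ∧
              (prodSet E m ⊆ X₀ ∨ prodSet E m ⊆ X₁)) ∧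
      (∀ n l k, 0 < l → k < l →
        i (n + 1) l k ≥ 2 ^ (∏ j ∈ Finset.range l, i n l j) + i n l k) := by
  refine ⟨iFun, fun n l k _ _ => iFun_pos n l k, ?_, ?_⟩
  · intro n l m hl hm hml F hF X₀ X₁ hcov
    apply key (iFun (n+1) l) (iFun n l) m _ F hF X₀ X₁ hcov
    intro k hk
    refine ⟨iFun_pos n l k, ?_⟩
    have hprod : ∏ j ∈ Finset.range k, iFun (n+1) l j
        = auxP (iFun n l) (∏ j ∈ Finset.range l, iFun n l j) k := by
      rw [auxP_eq]; rfl
    rw [hprod]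
    set X := ∏ j ∈ Finset.range l, iFun n l j with hX
    set P := auxP (iFun n l) X k with hP
    have hbX : iFun n l k ≤ X := by
      apply Finset.single_le_prod' (fun j _ => (iFun_pos n l j))
      exact Finset.mem_range.mpr (by omega)
    calc 2 ^ P * iFun n l k ≤ 2 ^ P * 2 ^ X := by
          apply Nat.mul_le_mul_left
          exact hbX.trans (Nat.le_of_lt (Nat.lt_two_pow_self (n := X)))
      _ = 2 ^ (X + P) := by rw [← pow_add, Nat.add_comm]
      _ ≤ iFun (n+1) l k := by
          show 2 ^ (X + P) ≤ nextFun (iFun n l) X k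
          unfold nextFun
          rw [← hP]
          omega
  · intro n l k _ _
    show nextFun (iFun n l) (∏ j ∈ Finset.range l, iFun n l j) k ≥ _
    unfold nextFun
    set X := ∏ j ∈ Finset.range l, iFun n l j with hX
    have h1 : 2 ^ X ≤ 2 ^ (X + auxP (iFun n l) X k) :=
      Nat.pow_le_pow_right (by norm_num) (Nat.le_add_right _ _)
    omega
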